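/- If (t₀,…,t₀) ∈ F(w, Γ(f)) for some w ∈ D(t₀), i.e. the diagonal point lies on the boundary of Γ(f) in the face determined by w, then d(w,Γ(g)) = 0, d(w,Γ(f)) ≠ 0, and σ(w)/(d(w,Γ(f)) − d(w,Γ(g))) = σ(w)/d(w,Γ(f)) = 1/t₀. Hence w ∈ T₋ and the largest candidate negative real pole β equals −1/t₀. -/
import Mathlib


open Finset Pointwise

variable {n : ℕ}

/-- The pairing `⟨k,x⟩ = ∑ i, k i * x i`. -/
noncomputable def dotp (k x : Fin n → ℝ) : ℝ := ∑ i, k i * x i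

/-- Convex hull of the union of translated positive orthants `m + ℝ₊ⁿ`. -/
def orthHull (S : Set (Fin n → ℝ)) : Set (Fin n → ℝ) :=
  convexHull ℝ (⋃ m ∈ S, {x : Fin n → ℝ | ∀ i, m i ≤ x i})

/-- `Γ` is a Newton polyhedron: the convex hull of `⋃_{m ∈ supp} (m + ℝ₊ⁿ)`
for a nonempty finite set of lattice points (the support of a polynomial
vanishing at the origin). -/
def IsNewtonPolyhedron (Γ : Set (Fin n → ℝ)) : Prop :=
  ∃ S : Finset (Fin n → ℕ), S.Nonempty ∧
    Γ = orthHull ((fun m : Fin n → ℕ => fun i => (m i : ℝ)) '' (S : Set (Fin n → ℕ)))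

/-- `d(k,Γ) = min_{x ∈ Γ} ⟨k,x⟩`. -/
noncomputable def dval (k : Fin n → ℝ) (Γ : Set (Fin n → ℝ)) : ℝ :=
  sInf ((fun x => dotp k x) '' Γ)

/-- First meet locus `F(k,Γ) = {x ∈ Γ : ⟨k,x⟩ = d(k,Γ)}`. -/
def fmeet (k : Fin n → ℝ) (Γ : Set (Fin n → ℝ)) : Set (Fin n → ℝ) :=
  {x ∈ Γ | dotp k x = dval k Γ}

/-- `σ(k) = ∑ i, k i`. -/
noncomputable def sigmaS (k : Fin n → ℝ) : ℝ := ∑ i, k i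

/-- The smallest face of `Γ` containing a point `p`: the intersection of all
first meet loci (faces) containing `p`. -/
def minFace (Γ : Set (Fin n → ℝ)) (p : Fin n → ℝ) : Set (Fin n → ℝ) :=
  ⋂₀ {F | p ∈ F ∧ ∃ k : Fin n → ℝ, (∀ i, 0 ≤ k i) ∧ F = fmeet k Γ}

/-- Cast a lattice vector to `ℝⁿ`. -/
def natVec (w : Fin n → ℕ) : Fin n → ℝ := fun i => (w i : ℝ)

/-- `w` is the primitive normal vector of a facet (face of dimension `n-1`) of `Γ`. -/
def IsPrimFacetNormal (Γ : Set (Fin n → ℝ)) (w : Fin n → ℕ) : Prop :=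
  w ≠ 0 ∧ Finset.univ.gcd w = 1 ∧
    Module.finrank ℝ (affineSpan ℝ (fmeet (natVec w) Γ)).direction = n - 1

/-- `D(t₀)`: primitive normal vectors of the facets of `Γ` containing the
smallest face through the diagonal point `p = (t₀,…,t₀)`. -/
def Dset (Γ : Set (Fin n → ℝ)) (p : Fin n → ℝ) : Set (Fin n → ℕ) :=
  {w | IsPrimFacetNormal Γ w ∧ minFace Γ p ⊆ fmeet (natVec w) Γ}

lemma newton_subset_nonneg {Γ : Set (Fin n → ℝ)} (h : IsNewtonPolyhedron Γ) :
    Γ ⊆ {x : Fin n → ℝ | ∀ i, 0 ≤ x i} := by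
  obtain ⟨S, -, rfl⟩ := h
  apply convexHull_min
  · rintro x hx
    simp only [Set.mem_iUnion] at hx
    obtain ⟨m, hm, hx⟩ := hx
    obtain ⟨m', -, rfl⟩ := hm
    intro i
    exact le_trans (by positivity) (hx i)
  · intro x hx y hy a b ha hb hab i
    have := hx i
    have := hy i
    simp only [Pi.add_apply, Pi.smul_apply, smul_eq_mul]
    positivity

lemma newton_nonempty {Γ : Set (Fin n → ℝ)} (h : IsNewtonPolyhedron Γ) :
    Γ.Nonempty := by
  obtain ⟨S, ⟨m, hm⟩, rfl⟩ := h
  refine ⟨fun i => (m i : ℝ), subset_convexHull ℝ _ ?_⟩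
  simp only [Set.mem_iUnion]
  exact ⟨fun i => (m i : ℝ), ⟨m, hm, rfl⟩, fun i => le_refl _⟩

lemma dotp_nonneg {v : Fin n → ℕ} {x : Fin n → ℝ} (hx : ∀ i, 0 ≤ x i) :
    0 ≤ dotp (natVec v) x := by
  apply Finset.sum_nonneg
  intro i _
  have := hx i
  simp only [natVec]
  positivity

lemma dval_nonneg {Γ : Set (Fin n → ℝ)} (h : IsNewtonPolyhedron Γ) (v : Fin n → ℕ) :
    0 ≤ dval (natVec v) Γ := by
  apply le_csInf ((newton_nonempty h).image _)
  rintro b ⟨x, hx, rfl⟩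
  exact dotp_nonneg (newton_subset_nonneg h hx)

lemma dval_le {Γ : Set (Fin n → ℝ)} (h : IsNewtonPolyhedron Γ) (v : Fin n → ℕ)
    {x : Fin n → ℝ} (hx : x ∈ Γ) : dval (natVec v) Γ ≤ dotp (natVec v) x := by
  apply csInf_le
  · refine ⟨0, ?_⟩
    rintro b ⟨y, hy, rfl⟩
    exact dotp_nonneg (newton_subset_nonneg h hy)
  · exact ⟨x, hx, rfl⟩

lemma dotp_add (k x y : Fin n → ℝ) : dotp k (x + y) = dotp k x + dotp k y := by
  simp [dotp, mul_add, Finset.sum_add_distrib]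

/-- Pairing with any point in the closure of the Minkowski sum dominates the
sum of the minimal values. -/
lemma sum_dval_le {Γf Γg : Set (Fin n → ℝ)} (hf : IsNewtonPolyhedron Γf)
    (hg : IsNewtonPolyhedron Γg) (v : Fin n → ℕ) {p : Fin n → ℝ}
    (hp : p ∈ closure (Γf + Γg)) :
    dval (natVec v) Γf + dval (natVec v) Γg ≤ dotp (natVec v) p := by
  have hcont : Continuous fun x : Fin n → ℝ => dotp (natVec v) x := by
    apply continuous_finset_sum
    intro i _
    exact continuous_const.mul (continuous_apply i)
  have hcl : IsClosed {x : Fin n → ℝ |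
      dval (natVec v) Γf + dval (natVec v) Γg ≤ dotp (natVec v) x} :=
    isClosed_le continuous_const hcont
  have hsub : Γf + Γg ⊆ {x : Fin n → ℝ |
      dval (natVec v) Γf + dval (natVec v) Γg ≤ dotp (natVec v) x} := by
    rintro x hx
    obtain ⟨a, ha, b, hb, rfl⟩ := Set.mem_add.1 hx
    simp only [Set.mem_setOf_eq, dotp_add]
    exact add_le_add (dval_le hf v ha) (dval_le hg v hb)
  exact hcl.closure_subset_iff.2 hsub hp

lemma sigma_pos {w : Fin n → ℕ} (hw : w ≠ 0) : 0 < sigmaS (natVec w) := by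
  obtain ⟨i, hi⟩ := Function.ne_iff.1 hw
  apply Finset.sum_pos' (fun j _ => by simp [natVec]) ⟨i, Finset.mem_univ i, ?_⟩
  simp only [natVec]
  exact_mod_cast Nat.pos_of_ne_zero (by simpa using hi)

lemma dotp_diag (v : Fin n → ℕ) (t : ℝ) :
    dotp (natVec v) (fun _ => t) = sigmaS (natVec v) * t := by
  simp [dotp, sigmaS, Finset.sum_mul]

/-- if the diagonal point `(t₀,…,t₀)` lies in `F(w,Γ(f))` for some
`w ∈ D(t₀)`, then `d(w,Γ(g)) = 0`, `d(w,Γ(f)) ≠ 0`,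
`σ(w)/(d(w,Γ(f)) − d(w,Γ(g))) = σ(w)/d(w,Γ(f)) = 1/t₀`, `w ∈ T₋`, and the largest
candidate negative real pole `β` equals `−1/t₀`. -/
theorem beta_eq_neg_inv_t0
    (hn : 2 ≤ n)
    (Γf Γg : Set (Fin n → ℝ))
    (hΓf : IsNewtonPolyhedron Γf) (hΓg : IsNewtonPolyhedron Γg)
    (t₀ : ℝ) (ht₀ : 0 < t₀)
    (hdiag : (fun _ : Fin n => t₀) ∈ frontier (Γf + Γg))
    (w : Fin n → ℕ) (hw : w ∈ Dset (Γf + Γg) (fun _ => t₀))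
    (hF : (fun _ : Fin n => t₀) ∈ fmeet (natVec w) Γf) :
    dval (natVec w) Γg = 0 ∧
    dval (natVec w) Γf ≠ 0 ∧
    sigmaS (natVec w) / (dval (natVec w) Γf - dval (natVec w) Γg)
      = sigmaS (natVec w) / dval (natVec w) Γf ∧
    sigmaS (natVec w) / dval (natVec w) Γf = 1 / t₀ ∧
    0 < dval (natVec w) Γf - dval (natVec w) Γg ∧
    sSup {r : ℝ | ∃ v : Fin n → ℕ, v ≠ 0 ∧
        0 < dval (natVec v) Γf - dval (natVec v) Γg ∧
        r = -(sigmaS (natVec v)) / (dval (natVec v) Γf - dval (natVec v) Γg)}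
      = -(1 / t₀) := by
  set p : Fin n → ℝ := fun _ => t₀ with hp
  have hwne : w ≠ 0 := hw.1.1
  have hσ : 0 < sigmaS (natVec w) := sigma_pos hwne
  have hpcl : p ∈ closure (Γf + Γg) := frontier_subset_closure hdiag
  -- d(w,Γf) = σ(w) * t₀
  have hdf : dval (natVec w) Γf = sigmaS (natVec w) * t₀ := by
    rw [← hF.2, dotp_diag]
  have hdfpos : 0 < dval (natVec w) Γf := hdf ▸ mul_pos hσ ht₀
  -- d(w,Γg) = 0
  have hdg0 : dval (natVec w) Γg = 0 := by
    have h1 := sum_dval_le hΓf hΓg w hpcl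
    rw [dotp_diag, ← hdf] at h1
    have h2 := dval_nonneg hΓg w
    linarith
  have hDpos : 0 < dval (natVec w) Γf - dval (natVec w) Γg := by
    rw [hdg0]; simpa using hdfpos
  have hratio : sigmaS (natVec w) / dval (natVec w) Γf = 1 / t₀ := by
    rw [hdf]
    field_simp
  refine ⟨hdg0, ne_of_gt hdfpos, by rw [hdg0, sub_zero], hratio, hDpos, ?_⟩
  -- the sup
  set S : Set ℝ := {r : ℝ | ∃ v : Fin n → ℕ, v ≠ 0 ∧
      0 < dval (natVec v) Γf - dval (natVec v) Γg ∧
      r = -(sigmaS (natVec v)) / (dval (natVec v) Γf - dval (natVec v) Γg)}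
  have hub : ∀ r ∈ S, r ≤ -(1 / t₀) := by
    rintro r ⟨v, hvne, hD, rfl⟩
    have hσv : 0 < sigmaS (natVec v) := sigma_pos hvne
    have hkey : dval (natVec v) Γf - dval (natVec v) Γg ≤ sigmaS (natVec v) * t₀ := by
      have h1 := sum_dval_le hΓf hΓg v hpcl
      rw [dotp_diag] at h1
      have h2 := dval_nonneg hΓg v
      linarith
    rw [neg_div, neg_le_neg_iff, div_le_div_iff₀ ht₀ hD]
    calc 1 * (dval (natVec v) Γf - dval (natVec v) Γg)
        = dval (natVec v) Γf - dval (natVec v) Γg := one_mul _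
      _ ≤ sigmaS (natVec v) * t₀ := hkey
  have hmem : -(1 / t₀) ∈ S := by
    refine ⟨w, hwne, hDpos, ?_⟩
    rw [hdg0, sub_zero, hdf, neg_div]
    congr 1
    field_simp
  exact le_antisymm (csSup_le ⟨_, hmem⟩ hub) (le_csSup ⟨-(1 / t₀), hub⟩ hmem)
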